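/- The scalar boundary matrix K(λ;ζ,κ,τ) = (1/sinh ζ)·[[sinh(λ+ζ), κ e^τ sinh 2λ],[κ e^{−τ} sinh 2λ, sinh(ζ−λ)]] satisfies the reflection equation R₁₂(λ−μ) K₁(λ) R₁₂(λ+μ) K₂(μ) = K₂(μ) R₁₂(λ+μ) K₁(λ) R₁₂(λ−μ), where R is the 6-vertex trigonometric R-matrix. -/

import Mathlib

open Complex Matrix Kronecker

noncomputable section

/-- The 6-vertex trigonometric R-matrix on ℂ² ⊗ ℂ². -/
def Rmat (η lam : ℂ) : Matrix (Fin 2 × Fin 2) (Fin 2 × Fin 2) ℂ :=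
  Matrix.of fun p q =>
    if p = q then (if p.1 = p.2 then Complex.sinh (lam + η) else Complex.sinh lam)
    else if p.1 = q.2 ∧ p.2 = q.1 then Complex.sinh η else 0

/-- The general non-diagonal scalar boundary matrix K(λ;ζ,κ,τ). -/
def Kmat (ζ κ τ lam : ℂ) : Matrix (Fin 2) (Fin 2) ℂ :=
  (Complex.sinh ζ)⁻¹ •
    !![Complex.sinh (lam + ζ), κ * Complex.exp τ * Complex.sinh (2 * lam);
       κ * Complex.exp (-τ) * Complex.sinh (2 * lam), Complex.sinh (ζ - lam)]

/-- Generic R-pattern matrix. -/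
def Rp (w₁ w₂ w₃ : ℂ) : Matrix (Fin 2 × Fin 2) (Fin 2 × Fin 2) ℂ :=
  Matrix.of fun p q =>
    if p = q then (if p.1 = p.2 then w₁ else w₂)
    else if p.1 = q.2 ∧ p.2 = q.1 then w₃ else 0

lemma Rmat_eq (η lam : ℂ) :
    Rmat η lam = Rp (Complex.sinh (lam + η)) (Complex.sinh lam) (Complex.sinh η) := rfl

lemma smul_Rp (s w₁ w₂ w₃ : ℂ) : s • Rp w₁ w₂ w₃ = Rp (s * w₁) (s * w₂) (s * w₃) := by
  ext p q
  simp only [Rp, Matrix.smul_apply, Matrix.of_apply, smul_eq_mul, mul_ite, mul_zero]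

/-- The polynomial K-pattern. -/
def Kp (x d t k : ℂ) : Matrix (Fin 2) (Fin 2) ℂ :=
  !![x * t * (x ^ 2 * d ^ 2 - 1), k * t ^ 2 * d * (x ^ 4 - 1);
     k * d * (x ^ 4 - 1), x * t * (d ^ 2 - x ^ 2)]

set_option maxHeartbeats 2000000 in
/-- Purely polynomial form of the reflection equation. -/
lemma poly_refl (a b c d t k : ℂ) :
    Rp (a ^ 2 * c ^ 2 - b ^ 2) (c * (a ^ 2 - b ^ 2)) (a * b * (c ^ 2 - 1)) *
        (Kp a d t k ⊗ₖ (1 : Matrix (Fin 2) (Fin 2) ℂ)) *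
        Rp (a ^ 2 * b ^ 2 * c ^ 2 - 1) (c * (a ^ 2 * b ^ 2 - 1)) (a * b * (c ^ 2 - 1)) *
        ((1 : Matrix (Fin 2) (Fin 2) ℂ) ⊗ₖ Kp b d t k) =
      ((1 : Matrix (Fin 2) (Fin 2) ℂ) ⊗ₖ Kp b d t k) *
        Rp (a ^ 2 * b ^ 2 * c ^ 2 - 1) (c * (a ^ 2 * b ^ 2 - 1)) (a * b * (c ^ 2 - 1)) *
        (Kp a d t k ⊗ₖ (1 : Matrix (Fin 2) (Fin 2) ℂ)) *
        Rp (a ^ 2 * c ^ 2 - b ^ 2) (c * (a ^ 2 - b ^ 2)) (a * b * (c ^ 2 - 1)) := by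
  ext ⟨i, j⟩ ⟨m, l⟩
  fin_cases i <;> fin_cases j <;> fin_cases m <;> fin_cases l
  all_goals simp [Prod.ext_iff, Rp, Kp, Matrix.mul_apply, Fintype.sum_prod_type,
    Fin.sum_univ_two, kroneckerMap_apply, Matrix.of_apply, Matrix.one_apply,
    Matrix.cons_val', Matrix.cons_val_zero, Matrix.cons_val_one, Matrix.head_cons,
    Matrix.head_fin_const, Matrix.empty_val', Matrix.cons_val_fin_one, Prod.mk.injEq]
  all_goals ring

lemma sinh_exp (z : ℂ) : Complex.sinh z = (Complex.exp z - Complex.exp (-z)) / 2 := rfl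

lemma scale_R (η lam mu : ℂ) :
    (2 * Complex.exp (lam + mu + η)) • Rmat η (lam - mu) =
      Rp (Complex.exp lam ^ 2 * Complex.exp η ^ 2 - Complex.exp mu ^ 2)
        (Complex.exp η * (Complex.exp lam ^ 2 - Complex.exp mu ^ 2))
        (Complex.exp lam * Complex.exp mu * (Complex.exp η ^ 2 - 1)) := by
  rw [Rmat_eq, smul_Rp]
  have h1 : 2 * Complex.exp (lam + mu + η) * Complex.sinh (lam - mu + η)
      = Complex.exp lam ^ 2 * Complex.exp η ^ 2 - Complex.exp mu ^ 2 := by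
    simp only [sinh_exp, Complex.exp_add, Complex.exp_sub, Complex.exp_neg]
    field_simp [Complex.exp_ne_zero]
  have h2 : 2 * Complex.exp (lam + mu + η) * Complex.sinh (lam - mu)
      = Complex.exp η * (Complex.exp lam ^ 2 - Complex.exp mu ^ 2) := by
    simp only [sinh_exp, Complex.exp_add, Complex.exp_sub, Complex.exp_neg]
    field_simp [Complex.exp_ne_zero]
  have h3 : 2 * Complex.exp (lam + mu + η) * Complex.sinh η
      = Complex.exp lam * Complex.exp mu * (Complex.exp η ^ 2 - 1) := by
    simp only [sinh_exp, Complex.exp_add, Complex.exp_neg]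
    field_simp [Complex.exp_ne_zero]
  rw [h1, h2, h3]

lemma scale_R' (η lam mu : ℂ) :
    (2 * Complex.exp (lam + mu + η)) • Rmat η (lam + mu) =
      Rp (Complex.exp lam ^ 2 * Complex.exp mu ^ 2 * Complex.exp η ^ 2 - 1)
        (Complex.exp η * (Complex.exp lam ^ 2 * Complex.exp mu ^ 2 - 1))
        (Complex.exp lam * Complex.exp mu * (Complex.exp η ^ 2 - 1)) := by
  rw [Rmat_eq, smul_Rp]
  have h1 : 2 * Complex.exp (lam + mu + η) * Complex.sinh (lam + mu + η)
      = Complex.exp lam ^ 2 * Complex.exp mu ^ 2 * Complex.exp η ^ 2 - 1 := by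
    simp only [sinh_exp, Complex.exp_add, Complex.exp_neg]
    field_simp [Complex.exp_ne_zero]
  have h2 : 2 * Complex.exp (lam + mu + η) * Complex.sinh (lam + mu)
      = Complex.exp η * (Complex.exp lam ^ 2 * Complex.exp mu ^ 2 - 1) := by
    simp only [sinh_exp, Complex.exp_add, Complex.exp_neg]
    field_simp [Complex.exp_ne_zero]
  have h3 : 2 * Complex.exp (lam + mu + η) * Complex.sinh η
      = Complex.exp lam * Complex.exp mu * (Complex.exp η ^ 2 - 1) := by
    simp only [sinh_exp, Complex.exp_add, Complex.exp_neg]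
    field_simp [Complex.exp_ne_zero]
  rw [h1, h2, h3]

lemma scale_K (ζ κ τ x : ℂ) (hζ : Complex.sinh ζ ≠ 0) :
    (2 * Complex.sinh ζ * Complex.exp (2 * x + ζ + τ)) • Kmat ζ κ τ x =
      Kp (Complex.exp x) (Complex.exp ζ) (Complex.exp τ) κ := by
  have hKm : Kmat ζ κ τ x = (Complex.sinh ζ)⁻¹ •
      !![Complex.sinh (x + ζ), κ * Complex.exp τ * Complex.sinh (2 * x);
         κ * Complex.exp (-τ) * Complex.sinh (2 * x), Complex.sinh (ζ - x)] := rfl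
  rw [hKm, smul_smul]
  have hsc : 2 * Complex.sinh ζ * Complex.exp (2 * x + ζ + τ) * (Complex.sinh ζ)⁻¹
      = 2 * Complex.exp (2 * x + ζ + τ) := by
    field_simp
  rw [hsc]
  ext i j
  fin_cases i <;> fin_cases j <;>
  · simp only [Kp, Matrix.smul_apply, smul_eq_mul, Matrix.cons_val', Matrix.cons_val_zero,
      Matrix.cons_val_one, Matrix.head_cons, Matrix.head_fin_const, Matrix.empty_val',
      Matrix.cons_val_fin_one, Fin.isValue, sinh_exp, Complex.exp_add, Complex.exp_sub,
      Complex.exp_neg, two_mul, Matrix.of_apply, Fin.zero_eta, Fin.mk_one]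
    field_simp [Complex.exp_ne_zero]
    ring

/-- The scalar boundary matrix K(λ;ζ,κ,τ) satisfies the reflection equation
R₁₂(λ−μ) K₁(λ) R₁₂(λ+μ) K₂(μ) = K₂(μ) R₁₂(λ+μ) K₁(λ) R₁₂(λ−μ). -/
theorem reflection_equation_Kmat (η ζ κ τ lam mu : ℂ) (hζ : Complex.sinh ζ ≠ 0) :
    Rmat η (lam - mu) * (Kmat ζ κ τ lam ⊗ₖ (1 : Matrix (Fin 2) (Fin 2) ℂ)) *
        Rmat η (lam + mu) * ((1 : Matrix (Fin 2) (Fin 2) ℂ) ⊗ₖ Kmat ζ κ τ mu) =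
      ((1 : Matrix (Fin 2) (Fin 2) ℂ) ⊗ₖ Kmat ζ κ τ mu) * Rmat η (lam + mu) *
        (Kmat ζ κ τ lam ⊗ₖ (1 : Matrix (Fin 2) (Fin 2) ℂ)) * Rmat η (lam - mu) := by
  set s1 : ℂ := 2 * Complex.exp (lam + mu + η) with hs1
  set s2 : ℂ := 2 * Complex.sinh ζ * Complex.exp (2 * lam + ζ + τ) with hs2
  set s4 : ℂ := 2 * Complex.sinh ζ * Complex.exp (2 * mu + ζ + τ) with hs4
  have h1 : s1 ≠ 0 := mul_ne_zero two_ne_zero (Complex.exp_ne_zero _)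
  have h2 : s2 ≠ 0 := mul_ne_zero (mul_ne_zero two_ne_zero hζ) (Complex.exp_ne_zero _)
  have h4 : s4 ≠ 0 := mul_ne_zero (mul_ne_zero two_ne_zero hζ) (Complex.exp_ne_zero _)
  have hs : s1 * s2 * s1 * s4 ≠ 0 :=
    mul_ne_zero (mul_ne_zero (mul_ne_zero h1 h2) h1) h4
  apply smul_right_injective (Matrix (Fin 2 × Fin 2) (Fin 2 × Fin 2) ℂ) hs
  have expand : ∀ W X Y Z : Matrix (Fin 2 × Fin 2) (Fin 2 × Fin 2) ℂ,
      (s1 * s2 * s1 * s4) • (W * X * Y * Z) = (s1 • W) * (s2 • X) * (s1 • Y) * (s4 • Z) := by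
    intro W X Y Z
    simp only [Matrix.smul_mul, Matrix.mul_smul, smul_smul]
    congr 1
    ring
  have expand' : ∀ W X Y Z : Matrix (Fin 2 × Fin 2) (Fin 2 × Fin 2) ℂ,
      (s1 * s2 * s1 * s4) • (W * X * Y * Z) = (s4 • W) * (s1 • X) * (s2 • Y) * (s1 • Z) := by
    intro W X Y Z
    simp only [Matrix.smul_mul, Matrix.mul_smul, smul_smul]
    congr 1
    ring
  simp only []
  rw [expand, expand', hs1, hs2, hs4, ← Matrix.smul_kronecker, ← Matrix.kronecker_smul,
    scale_R, scale_R', scale_K ζ κ τ lam hζ, scale_K ζ κ τ mu hζ]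
  exact poly_refl (Complex.exp lam) (Complex.exp mu) (Complex.exp η) (Complex.exp ζ)
    (Complex.exp τ) κ

end
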